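/- Let X be a simple graph on a vertex type V which is a tree and locally finite, and assume every vertex v of X has degree at least 2. Let A be a commutative ring, M an A-module, and w : V → A^× a weight function. Define the Laplacian Δ_w : Maps(E(X), M) → Maps(V, M) by (Δ_w f)(v) = w(v) • ∑_{e ∈ E_v} f(e), where E_v is the (finite) set of edges of X incident to v. Then Δ_w is surjective: for every function F : V → M there exists f : E(X) → M with Δ_w f = F. -/

import Mathlib

/-- The *Laplacian of weight `w`* of a locally finite simple graph `X`: it sends a function
`f : E(X) → M` on the edges to the function `v ↦ w v • ∑_{e ∈ E_v} f e` on the vertices,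
where `E_v` is the (finite) set of edges incident to `v`. -/
noncomputable def SimpleGraph.laplace {V : Type*} [DecidableEq V] (X : SimpleGraph V)
    [∀ v, Fintype (X.neighborSet v)] {A : Type*} [CommRing A] (M : Type*) [AddCommGroup M]
    [Module A M] (w : V → Aˣ) (f : X.edgeSet → M) (v : V) : M :=
  (w v : A) • ∑ e : X.incidenceSet v, f ⟨e.1, X.incidenceSet_subset v e.2⟩

private lemma concat_isPath_aux {V : Type*} {G : SimpleGraph V} {u v x : V}
    {p : G.Walk u v} (hp : p.IsPath) (h : G.Adj v x) (hx : x ∉ p.support) :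
    (p.concat h).IsPath := by
  rw [SimpleGraph.Walk.isPath_def, SimpleGraph.Walk.support_concat,
    List.nodup_append]
  refine ⟨hp.support_nodup, List.nodup_singleton x, ?_⟩
  intro a ha b hb hab
  rw [List.mem_singleton] at hb
  subst hb
  exact hx (hab ▸ ha)

private noncomputable def auxA {V M : Type*} [DecidableEq V] [AddCommGroup M]
    (d : V → ℕ) (s : V → V) (hs : ∀ u, d (s u) = d u + 1)
    (N : V → Finset V) (g : V → M) (v : V) : M :=
  g v - ∑ u ∈ ((N v).filter (fun u => s u = v)).attach, auxA d s hs N g u.1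
termination_by d v
decreasing_by
  obtain ⟨-, h2⟩ := Finset.mem_filter.mp u.2
  have h3 := hs u.1
  rw [h2] at h3
  omega

private lemma auxA_eq {V M : Type*} [DecidableEq V] [AddCommGroup M]
    (d : V → ℕ) (s : V → V) (hs : ∀ u, d (s u) = d u + 1)
    (N : V → Finset V) (g : V → M) (v : V) :
    auxA d s hs N g v
      = g v - ∑ u ∈ (N v).filter (fun u => s u = v), auxA d s hs N g u := by
  rw [auxA, Finset.sum_attach]

/-- Let `X` be a locally finite simple graph on `V` which is a tree, in which
every vertex has degree at least `2`. Let `A` be a commutative ring, `M` an `A`-module and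
`w : V → A^×` a weight function. Then the Laplacian `Δ_w : Maps(E(X), M) → Maps(V, M)`,
`(Δ_w f) v = w v • ∑_{e ∈ E_v} f e`, is surjective. -/
theorem laplace_surjective {V : Type*} [DecidableEq V] {X : SimpleGraph V}
    [∀ v, Fintype (X.neighborSet v)] (htree : X.IsTree)
    {A : Type*} [CommRing A] (M : Type*) [AddCommGroup M] [Module A M]
    (w : V → Aˣ) (hdeg : ∀ v, 2 ≤ X.degree v) :
    Function.Surjective (X.laplace M w) := by
  classical
  intro F
  obtain ⟨r⟩ := htree.isConnected.nonempty
  have hEU := htree.existsUnique_path r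
  obtain ⟨P, hP, hPu⟩ : ∃ P : (v : V) → X.Walk r v, (∀ v, (P v).IsPath) ∧
      (∀ v (q : X.Walk r v), q.IsPath → q = P v) :=
    ⟨fun v => (hEU v).choose, fun v => (hEU v).choose_spec.1,
      fun v q hq => (hEU v).choose_spec.2 q hq⟩
  set d : V → ℕ := fun v => (P v).length with hd
  -- a neighbour of `v` lying on the path to `v` determines the path to `v`
  have key : ∀ v u (h : X.Adj v u), u ∈ (P v).support → P v = (P u).concat h.symm := by
    intro v u h hu
    have hvt : v ∉ ((P v).takeUntil u hu).support := by
      intro hv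
      have hnodup := (hP v).support_nodup
      rw [← SimpleGraph.Walk.take_spec (P v) hu, SimpleGraph.Walk.support_append] at hnodup
      have hvtail : v ∈ ((P v).dropUntil u hu).support.tail := by
        have hv2 : v ∈ ((P v).dropUntil u hu).support := SimpleGraph.Walk.end_mem_support _
        rw [SimpleGraph.Walk.support_eq_cons] at hv2
        rcases List.mem_cons.mp hv2 with h1 | h1
        · exact absurd h1 h.ne
        · exact h1
      exact List.disjoint_of_nodup_append hnodup hv hvtail
    have hcat : (((P v).takeUntil u hu).concat h.symm).IsPath :=
      concat_isPath_aux ((hP v).takeUntil hu) h.symm hvt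
    have h1 := hPu v _ hcat
    have h2 := hPu u _ ((hP v).takeUntil hu)
    rw [← h1, ← h2]
  -- every vertex has a neighbour one step further from the root
  have L1 : ∀ v, ∃ u, X.Adj v u ∧ d u = d v + 1 := by
    intro v
    have hcard : ((X.neighborFinset v).filter (· ∈ (P v).support)).card ≤ 1 := by
      apply Finset.card_le_one.mpr
      intro a ha b hb
      simp only [Finset.mem_filter, SimpleGraph.mem_neighborFinset] at ha hb
      have h1 := key v a ha.1 ha.2
      have h2 := key v b hb.1 hb.2
      obtain ⟨hab, -⟩ := SimpleGraph.Walk.concat_inj (h1.symm.trans h2)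
      exact hab
    have hex : ∃ u ∈ X.neighborFinset v, u ∉ (P v).support := by
      by_contra hc
      push_neg at hc
      have heq : (X.neighborFinset v).filter (· ∈ (P v).support) = X.neighborFinset v :=
        Finset.filter_true_of_mem hc
      rw [heq] at hcard
      have hdv := hdeg v
      rw [← SimpleGraph.card_neighborFinset_eq_degree] at hdv
      omega
    obtain ⟨u, hu1, hu2⟩ := hex
    rw [SimpleGraph.mem_neighborFinset] at hu1
    refine ⟨u, hu1, ?_⟩
    have hcat : ((P v).concat hu1).IsPath := concat_isPath_aux (hP v) hu1 hu2
    have h1 := hPu u _ hcat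
    simp only [hd, ← h1, SimpleGraph.Walk.length_concat]
  choose s hs1 hs2 using L1
  -- the successor edges are pairwise distinct
  have sedge : ∀ u v : V, (s(u, s u) : Sym2 V) = s(v, s v) → u = v := by
    intro u v h
    rw [Sym2.eq_iff] at h
    rcases h with ⟨h1, -⟩ | ⟨h1, h2⟩
    · exact h1
    · exfalso
      have e1 := hs2 v
      have e2 := hs2 u
      rw [← h1] at e1
      rw [h2] at e2
      omega
  set g : V → M := fun v => ((w v)⁻¹ : Aˣ) • F v with hg
  set a : V → M := auxA d s hs2 (fun v => X.neighborFinset v) g with ha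
  set f0 : X.edgeSet → M := fun e =>
    if h : ∃ v, (e : Sym2 V) = s(v, s v) then a h.choose else 0 with hf
  have hfval : ∀ (e : X.edgeSet) (x : V), (e : Sym2 V) = s(x, s x) → f0 e = a x := by
    intro e x hx
    have hh : ∃ v, (e : Sym2 V) = s(v, s v) := ⟨x, hx⟩
    simp only [hf]
    rw [dif_pos hh]
    congr 1
    exact sedge _ _ (hh.choose_spec.symm.trans hx)
  have hfzero : ∀ (e : X.edgeSet), (¬ ∃ v, (e : Sym2 V) = s(v, s v)) → f0 e = 0 := by
    intro e h
    simp only [hf]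
    rw [dif_neg h]
  refine ⟨f0, ?_⟩
  funext v
  unfold SimpleGraph.laplace
  set F' : V → M := fun u =>
    if h : X.Adj v u then f0 ⟨s(v, u), (X.mem_edgeSet).mpr h⟩ else 0 with hF'
  have step1 : (∑ e : X.incidenceSet v, f0 ⟨e.1, X.incidenceSet_subset v e.2⟩)
      = ∑ u : X.neighborSet v, F' u.1 := by
    refine (Fintype.sum_equiv (X.incidenceSetEquivNeighborSet v).symm
      (fun u : X.neighborSet v => F' u.1)
      (fun e : X.incidenceSet v => f0 ⟨e.1, X.incidenceSet_subset v e.2⟩) ?_).symm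
    intro u
    have hadj : X.Adj v u.1 := u.2
    simp only [hF', dif_pos hadj]
    rfl
  have step2 : (∑ u : X.neighborSet v, F' u.1) = ∑ u ∈ X.neighborFinset v, F' u :=
    (Finset.sum_subtype _ (fun x => by simp) F').symm
  have stepB : (∑ u ∈ X.neighborFinset v, F' u)
      = a v + ∑ u ∈ (X.neighborFinset v).filter (fun u => s u = v), a u := by
    have hsv : s v ∈ X.neighborFinset v := (SimpleGraph.mem_neighborFinset _ _ _).mpr (hs1 v)
    rw [← Finset.add_sum_erase _ F' hsv]
    congr 1
    · simp only [hF', dif_pos (hs1 v)]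
      exact hfval _ v rfl
    · have hcongr : ∀ u ∈ (X.neighborFinset v).erase (s v),
          F' u = if s u = v then a u else 0 := by
        intro u hu
        obtain ⟨hne, hmem⟩ := Finset.mem_erase.mp hu
        rw [SimpleGraph.mem_neighborFinset] at hmem
        simp only [hF', dif_pos hmem]
        by_cases hsu : s u = v
        · rw [if_pos hsu]
          apply hfval
          show (s(v, u) : Sym2 V) = s(u, s u)
          rw [hsu]
          exact Sym2.eq_swap
        · rw [if_neg hsu]
          apply hfzero
          rintro ⟨x, hx⟩
          rw [Sym2.eq_iff] at hx
          rcases hx with ⟨h1, h2⟩ | ⟨h1, h2⟩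
          · exact hne (h2 ▸ h1 ▸ rfl)
          · exact hsu (h2 ▸ h1 ▸ rfl)
      rw [Finset.sum_congr rfl hcongr, ← Finset.sum_filter,
        Finset.filter_erase, Finset.erase_eq_of_notMem]
      intro hmem
      obtain ⟨-, h2⟩ := Finset.mem_filter.mp hmem
      have e1 := hs2 v
      have e2 := hs2 (s v)
      rw [h2] at e2
      omega
  rw [step1, step2, stepB]
  have hav : a v + ∑ u ∈ (X.neighborFinset v).filter (fun u => s u = v), a u = g v := by
    rw [ha, auxA_eq d s hs2 (fun v => X.neighborFinset v) g v, sub_add_cancel]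
  rw [hav, hg]
  show (w v : A) • ((w v)⁻¹ • F v) = F v
  rw [Units.smul_def, smul_smul, Units.mul_inv, one_smul]
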